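/- Let d ≥ 2, 0 ≤ p ≤ d, with ε_i = 1 for i ≤ p and ε_i = −1 for i > p. Let U ⊆ ℝ^d be a connected open set and ψ : U → ℝ a smooth function such that ∂_i∂_j ψ = 0 on U for all i ≠ j and ε_i ∂_i∂_i ψ = ε_j ∂_j∂_j ψ on U for all i,j. Then there exist a constant K ∈ ℝ, a vector b ∈ ℝ^d and a constant c ∈ ℝ such that ψ(x) = (K/2) Σ_i ε_i x_i² + Σ_i b_i x_i + c for all x ∈ U. Conversely, every function of this form satisfies those partial differential equations. -/

import Mathlib

open Set Topology Filter

/-- The second partial derivative `∂_j ∂_k f`. -/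
noncomputable def sder {d : ℕ} (f : (Fin d → ℝ) → ℝ) (j k : Fin d) (x : Fin d → ℝ) : ℝ :=
  fderiv ℝ (fun y => fderiv ℝ f y (Pi.single k 1)) x (Pi.single j 1)

/-- The sign `ε_i` of the standard quadratic form of signature `(p, d−p)`. -/
def eps (d p : ℕ) (i : Fin d) : ℝ := if (i : ℕ) < p then 1 else -1

/-- The function `(K/2)·q(x) + Σ_i b_i x_i + c` where `q` is the standard quadratic
form of signature `(p, d−p)`. -/
noncomputable def polyPot (d p : ℕ) (K : ℝ) (b : Fin d → ℝ) (c : ℝ) (x : Fin d → ℝ) : ℝ :=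
  K / 2 * (∑ i, eps d p i * x i ^ 2) + (∑ i, b i * x i) + c

section Aux

variable {E F : Type*} [NormedAddCommGroup E] [NormedSpace ℝ E]
  [NormedAddCommGroup F] [NormedSpace ℝ F]

/-- A function with zero derivative on an open preconnected set is constant there. -/
lemma constOn_of_fderiv_zero {U : Set E} (hU : IsOpen U) (hconn : IsPreconnected U)
    {f : E → F} (hdiff : ∀ x ∈ U, DifferentiableAt ℝ f x)
    (h0 : ∀ x ∈ U, fderiv ℝ f x = 0) {x y : E} (hx : x ∈ U) (hy : y ∈ U) : f x = f y := by
  haveI : PreconnectedSpace U := Subtype.preconnectedSpace hconn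
  have hloc : IsLocallyConstant (U.restrict f) := by
    rw [IsLocallyConstant.iff_exists_open]
    rintro ⟨z, hz⟩
    obtain ⟨r, hr, hball⟩ := Metric.isOpen_iff.1 hU z hz
    refine ⟨Subtype.val ⁻¹' Metric.ball z r, (Metric.isOpen_ball).preimage continuous_subtype_val,
      by simpa using hr, ?_⟩
    rintro ⟨w, hw⟩ hwball
    exact (convex_ball z r).is_const_of_fderivWithin_eq_zero
      (fun a ha => (hdiff a (hball ha)).differentiableWithinAt)
      (fun a ha => by rw [fderivWithin_of_isOpen Metric.isOpen_ball ha]; exact h0 a (hball ha))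
      (by simpa using hwball) (Metric.mem_ball_self hr)
  exact hloc.apply_eq_of_preconnectedSpace ⟨x, hx⟩ ⟨y, hy⟩

lemma clm_ext_pi {d : ℕ} {L M : (Fin d → ℝ) →L[ℝ] F}
    (h : ∀ i, L (Pi.single i 1) = M (Pi.single i 1)) : L = M := by
  apply ContinuousLinearMap.coe_injective
  apply LinearMap.pi_ext
  intro i x
  have hx : (Pi.single i x : Fin d → ℝ) = x • (Pi.single i 1 : Fin d → ℝ) := by
    ext j
    by_cases hj : j = i <;> simp [Pi.single_apply, hj]
  simp only [ContinuousLinearMap.coe_coe, hx, map_smul, h i]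

lemma sder_apply {d : ℕ} {f : (Fin d → ℝ) → ℝ} {x : Fin d → ℝ}
    (hf : DifferentiableAt ℝ (fderiv ℝ f) x) (j k : Fin d) :
    sder f j k x = fderiv ℝ (fderiv ℝ f) x (Pi.single j 1) (Pi.single k 1) := by
  have h := (ContinuousLinearMap.apply ℝ ℝ (Pi.single k 1 : Fin d → ℝ)).hasFDerivAt.comp x
    hf.hasFDerivAt
  have heq : (fun y => fderiv ℝ f y (Pi.single k 1)) =
      (ContinuousLinearMap.apply ℝ ℝ (Pi.single k 1 : Fin d → ℝ)) ∘ (fderiv ℝ f) := rfl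
  rw [sder, heq, h.fderiv]
  rfl

lemma eps_sq (d p : ℕ) (i : Fin d) : eps d p i * eps d p i = 1 := by
  unfold eps; split_ifs <;> norm_num

lemma affine_hasFDerivAt {d : ℕ} (a r : ℝ) (k : Fin d) (x : Fin d → ℝ) :
    HasFDerivAt (fun y : Fin d → ℝ => a * y k + r)
      (a • (ContinuousLinearMap.proj (R := ℝ) (φ := fun _ : Fin d => ℝ) k)) x := by
  simpa using (((ContinuousLinearMap.proj (R := ℝ) (φ := fun _ : Fin d => ℝ) k).hasFDerivAt
    (x := x)).const_mul a).add_const r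

lemma polyPot_hasFDerivAt (d p : ℕ) (K : ℝ) (b : Fin d → ℝ) (c : ℝ) (x : Fin d → ℝ) :
    HasFDerivAt (polyPot d p K b c)
      (∑ i, (K * eps d p i * x i + b i) •
        (ContinuousLinearMap.proj (R := ℝ) (φ := fun _ : Fin d => ℝ) i)) x := by
  have hone : ∀ i : Fin d, HasFDerivAt (fun y : Fin d → ℝ => y i)
      (ContinuousLinearMap.proj (R := ℝ) (φ := fun _ : Fin d => ℝ) i) x :=
    fun i => ((ContinuousLinearMap.proj (R := ℝ) (φ := fun _ : Fin d => ℝ) i).hasFDerivAt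
      (x := x) : _)
  have hsq : ∀ i : Fin d, HasFDerivAt (fun y : Fin d → ℝ => eps d p i * y i ^ 2)
      ((eps d p i * (2 * x i)) •
        (ContinuousLinearMap.proj (R := ℝ) (φ := fun _ : Fin d => ℝ) i)) x := by
    intro i
    have hfun : (fun y : Fin d → ℝ => eps d p i * y i ^ 2)
        = fun y : Fin d → ℝ => eps d p i * (y i * y i) := by funext y; ring
    rw [hfun]
    have := ((hone i).mul (hone i)).const_mul (eps d p i)
    refine this.congr_fderiv ?_
    ext v
    simp only [ContinuousLinearMap.smul_apply, ContinuousLinearMap.add_apply,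
      ContinuousLinearMap.proj_apply, smul_eq_mul]
    ring
  have hlin : ∀ i : Fin d, HasFDerivAt (fun y : Fin d → ℝ => b i * y i)
      ((b i) • (ContinuousLinearMap.proj (R := ℝ) (φ := fun _ : Fin d => ℝ) i)) x :=
    fun i => by simpa [ContinuousLinearMap.smul_apply] using (hone i).const_mul (b i)
  have h1 : HasFDerivAt (fun y : Fin d → ℝ => K / 2 * (∑ i, eps d p i * y i ^ 2))
      ((K / 2) • (∑ i, (eps d p i * (2 * x i)) •
        (ContinuousLinearMap.proj (R := ℝ) (φ := fun _ : Fin d => ℝ) i))) x := by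
    have := (HasFDerivAt.fun_sum (u := Finset.univ) (fun i _ => hsq i)).const_mul (K / 2)
    simpa using this
  have h2 : HasFDerivAt (fun y : Fin d → ℝ => ∑ i, b i * y i)
      (∑ i, (b i) • (ContinuousLinearMap.proj (R := ℝ) (φ := fun _ : Fin d => ℝ) i)) x :=
    HasFDerivAt.fun_sum (u := Finset.univ) (fun i _ => hlin i)
  have h3 := (h1.add h2).add_const c
  refine h3.congr_fderiv ?_
  ext v
  simp only [ContinuousLinearMap.sum_apply, ContinuousLinearMap.smul_apply,
    ContinuousLinearMap.add_apply, ContinuousLinearMap.proj_apply, smul_eq_mul,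
    Finset.mul_sum, ← Finset.sum_add_distrib]
  apply Finset.sum_congr rfl
  intro i _
  ring

lemma fderiv_polyPot_apply (d p : ℕ) (K : ℝ) (b : Fin d → ℝ) (c : ℝ) (x : Fin d → ℝ)
    (k : Fin d) :
    fderiv ℝ (polyPot d p K b c) x (Pi.single k 1) = K * eps d p k * x k + b k := by
  rw [(polyPot_hasFDerivAt d p K b c x).fderiv]
  simp [ContinuousLinearMap.proj_apply, Pi.single_apply, Finset.sum_ite_eq']

lemma sder_polyPot (d p : ℕ) (K : ℝ) (b : Fin d → ℝ) (c : ℝ) (x : Fin d → ℝ)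
    (j k : Fin d) :
    sder (polyPot d p K b c) j k x = if j = k then K * eps d p k else 0 := by
  have heq : (fun y => fderiv ℝ (polyPot d p K b c) y (Pi.single k 1)) =
      (fun y : Fin d → ℝ => K * eps d p k * y k + b k) := by
    funext y; exact fderiv_polyPot_apply d p K b c y k
  rw [sder, heq, (affine_hasFDerivAt (K * eps d p k) (b k) k x).fderiv]
  by_cases h : j = k <;> simp [h, Pi.single_apply]

end Aux

/-- A smooth function `ψ` on a connected open set satisfies `∂_i∂_j ψ = 0` for
`i ≠ j` and `ε_i ∂_i∂_i ψ = ε_j ∂_j∂_j ψ` iff it has the form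
`ψ = (K/2)q + Λ` with `Λ` affine (the classification of potentials of stiff
connections). -/
theorem stmt11 (d p : ℕ) (hd : 2 ≤ d) (hp : p ≤ d)
    (U : Set (Fin d → ℝ)) (hUopen : IsOpen U) (hUconn : IsConnected U)
    (ψ : (Fin d → ℝ) → ℝ) (hψ : ContDiffOn ℝ (⊤ : ℕ∞) ψ U) :
    ((∀ x ∈ U, ∀ i j : Fin d, i ≠ j → sder ψ i j x = 0) →
      (∀ x ∈ U, ∀ i j : Fin d, eps d p i * sder ψ i i x = eps d p j * sder ψ j j x) →
      ∃ (K : ℝ) (b : Fin d → ℝ) (c : ℝ), ∀ x ∈ U, ψ x = polyPot d p K b c x) ∧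
    (∀ (K : ℝ) (b : Fin d → ℝ) (c : ℝ),
      (∀ x ∈ U, ∀ i j : Fin d, i ≠ j → sder (polyPot d p K b c) i j x = 0) ∧
      (∀ x ∈ U, ∀ i j : Fin d,
        eps d p i * sder (polyPot d p K b c) i i x
          = eps d p j * sder (polyPot d p K b c) j j x)) := by
  have heKK : ∀ (K : ℝ) (m : Fin d), eps d p m * (K * eps d p m) = K := fun K m => by
    rw [mul_comm K, ← mul_assoc, eps_sq, one_mul]
  constructor
  · -- forward direction
    intro h1 h2
    obtain ⟨x₀, hx₀U⟩ := hUconn.nonempty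
    have htop : ∀ m : ℕ, (m : WithTop ℕ∞) ≤ ((⊤ : ℕ∞) : WithTop ℕ∞) :=
      fun m => ENat.natCast_le_of_coe_top_le_withTop le_rfl m
    have hCD : ∀ x ∈ U, ContDiffAt ℝ (⊤ : ℕ∞) ψ x :=
      fun x hx => hψ.contDiffAt (hUopen.mem_nhds hx)
    have hψdiff : ∀ x ∈ U, DifferentiableAt ℝ ψ x :=
      fun x hx => (hCD x hx).differentiableAt (by simp)
    have hfd : ∀ x ∈ U, ContDiffAt ℝ 2 (fderiv ℝ ψ) x :=
      fun x hx => (hCD x hx).fderiv_right (by exact_mod_cast htop 3)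
    -- `uapp j = ∂_j ψ`
    have hu2 : ∀ (j : Fin d), ∀ x ∈ U,
        ContDiffAt ℝ 2 (fun y => fderiv ℝ ψ y (Pi.single j 1)) x := fun j x hx =>
      (ContinuousLinearMap.apply ℝ ℝ (Pi.single j 1 : Fin d → ℝ)).contDiff.comp_contDiffAt x
        (hfd x hx)
    have huDiff : ∀ (j : Fin d), ∀ x ∈ U,
        DifferentiableAt ℝ (fun y => fderiv ℝ ψ y (Pi.single j 1)) x :=
      fun j x hx => (hu2 j x hx).differentiableAt two_ne_zero
    have hDu : ∀ (j : Fin d), ∀ x ∈ U,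
        DifferentiableAt ℝ (fderiv ℝ (fun y => fderiv ℝ ψ y (Pi.single j 1))) x :=
      fun j x hx => ((hu2 j x hx).fderiv_right (m := 1) (by norm_num)).differentiableAt one_ne_zero
    have hsdd : ∀ (j k : Fin d), ∀ x ∈ U, DifferentiableAt ℝ (sder ψ j k) x := by
      intro j k x hx
      exact ((ContinuousLinearMap.apply ℝ ℝ (Pi.single j 1 : Fin d → ℝ)).differentiableAt.comp x
        (hDu k x hx) : _)
    -- key : derivatives of the pure second derivatives vanish in transverse directions
    have key : ∀ x ∈ U, ∀ i j : Fin d, i ≠ j →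
        fderiv ℝ (sder ψ j j) x (Pi.single i 1) = 0 := by
      intro x hx i j hij
      have e1 : fderiv ℝ (sder ψ j j) x (Pi.single i 1)
          = sder (fun y => fderiv ℝ ψ y (Pi.single j 1)) i j x := rfl
      have hsymm := ((hu2 j x hx).isSymmSndFDerivAt (by simp))
        (Pi.single i 1 : Fin d → ℝ) (Pi.single j 1 : Fin d → ℝ)
      rw [e1, sder_apply (hDu j x hx), hsymm, ← sder_apply (hDu j x hx)]
      have e2 : sder (fun y => fderiv ℝ ψ y (Pi.single j 1)) j i x
          = fderiv ℝ (sder ψ i j) x (Pi.single j 1) := rfl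
      rw [e2]
      have h0 : sder ψ i j =ᶠ[nhds x] (fun _ => (0 : ℝ)) :=
        Filter.eventuallyEq_of_mem (hUopen.mem_nhds hx) (fun y hy => h1 y hy i j hij)
      rw [h0.fderiv_eq]
      simp
    -- the common value κ of `ε_i ∂_i ∂_i ψ` is constant
    have hκdiff : ∀ x ∈ U, DifferentiableAt ℝ
        (fun y => eps d p ⟨0, by omega⟩ * sder ψ ⟨0, by omega⟩ ⟨0, by omega⟩ y) x :=
      fun x hx => (hsdd _ _ x hx).const_mul _
    have hκ0 : ∀ x ∈ U, fderiv ℝ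
        (fun y => eps d p ⟨0, by omega⟩ * sder ψ ⟨0, by omega⟩ ⟨0, by omega⟩ y) x = 0 := by
      intro x hx
      refine clm_ext_pi fun i => ?_
      obtain ⟨j, hij⟩ : ∃ j : Fin d, i ≠ j := by
        rcases eq_or_ne i ⟨0, by omega⟩ with h | h
        · exact ⟨⟨1, by omega⟩, by rw [h]; simp [Fin.ext_iff]⟩
        · exact ⟨⟨0, by omega⟩, h⟩
      have heq : (fun y => eps d p ⟨0, by omega⟩ * sder ψ ⟨0, by omega⟩ ⟨0, by omega⟩ y)
          =ᶠ[nhds x] fun y => eps d p j * sder ψ j j y :=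
        Filter.eventuallyEq_of_mem (hUopen.mem_nhds hx) (fun y hy => h2 y hy ⟨0, by omega⟩ j)
      rw [heq.fderiv_eq, fderiv_const_mul (hsdd j j x hx)]
      simp [key x hx i j hij]
    have hKconst : ∀ x ∈ U,
        eps d p ⟨0, by omega⟩ * sder ψ ⟨0, by omega⟩ ⟨0, by omega⟩ x
          = eps d p ⟨0, by omega⟩ * sder ψ ⟨0, by omega⟩ ⟨0, by omega⟩ x₀ :=
      fun x hx => constOn_of_fderiv_zero hUopen hUconn.isPreconnected hκdiff hκ0 hx hx₀U
    set K : ℝ := eps d p ⟨0, by omega⟩ * sder ψ ⟨0, by omega⟩ ⟨0, by omega⟩ x₀ with hKdef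
    have hdiag : ∀ x ∈ U, ∀ i, sder ψ i i x = eps d p i * K := by
      intro x hx i
      have hKx : eps d p i * sder ψ i i x = K := by
        rw [← h2 x hx ⟨0, by omega⟩ i]; exact hKconst x hx
      calc sder ψ i i x = eps d p i * (eps d p i * sder ψ i i x) := by
            rw [← mul_assoc, eps_sq, one_mul]
        _ = eps d p i * K := by rw [hKx]
    set b : Fin d → ℝ := fun k => fderiv ℝ ψ x₀ (Pi.single k 1) - K * eps d p k * x₀ k
      with hbdef
    -- the functions w k := ∂_k ψ − (K ε_k x_k + b_k) vanish identically on U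
    have hwdiff : ∀ (k : Fin d), ∀ x ∈ U, DifferentiableAt ℝ
        (fun y => fderiv ℝ ψ y (Pi.single k 1) - (K * eps d p k * y k + b k)) x :=
      fun k x hx => (huDiff k x hx).sub (affine_hasFDerivAt _ _ k x).differentiableAt
    have hw0 : ∀ (k : Fin d), ∀ x ∈ U, fderiv ℝ
        (fun y => fderiv ℝ ψ y (Pi.single k 1) - (K * eps d p k * y k + b k)) x = 0 := by
      intro k x hx
      rw [fderiv_fun_sub (huDiff k x hx) (affine_hasFDerivAt _ _ k x).differentiableAt,
        (affine_hasFDerivAt (K * eps d p k) (b k) k x).fderiv]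
      refine clm_ext_pi fun i => ?_
      simp only [ContinuousLinearMap.sub_apply, ContinuousLinearMap.smul_apply,
        ContinuousLinearMap.proj_apply, ContinuousLinearMap.zero_apply, smul_eq_mul]
      have e3 : fderiv ℝ (fun y => fderiv ℝ ψ y (Pi.single k 1)) x (Pi.single i 1)
          = sder ψ i k x := rfl
      rw [e3]
      rcases eq_or_ne i k with h | h
      · subst h
        rw [hdiag x hx i, Pi.single_eq_same]
        ring
      · rw [h1 x hx i k h, Pi.single_eq_of_ne (Ne.symm h)]
        ring
    have hgrad : ∀ x ∈ U, ∀ k : Fin d,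
        fderiv ℝ ψ x (Pi.single k 1) = K * eps d p k * x k + b k := by
      intro x hx k
      have hcst := constOn_of_fderiv_zero hUopen hUconn.isPreconnected (hwdiff k) (hw0 k)
        hx hx₀U
      have h0 : fderiv ℝ ψ x₀ (Pi.single k 1) - (K * eps d p k * x₀ k + b k) = 0 := by
        rw [hbdef]; ring
      rw [h0] at hcst
      linarith [hcst]
    set c : ℝ := ψ x₀ - polyPot d p K b 0 x₀ with hcdef
    refine ⟨K, b, c, fun x hx => ?_⟩
    have hPd : ∀ y, DifferentiableAt ℝ (polyPot d p K b c) y :=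
      fun y => (polyPot_hasFDerivAt d p K b c y).differentiableAt
    have hh0 : ∀ y ∈ U, fderiv ℝ (fun z => ψ z - polyPot d p K b c z) y = 0 := by
      intro y hy
      rw [fderiv_fun_sub (hψdiff y hy) (hPd y)]
      refine clm_ext_pi fun k => ?_
      simp only [ContinuousLinearMap.sub_apply, ContinuousLinearMap.zero_apply]
      rw [hgrad y hy k, fderiv_polyPot_apply]
      ring
    have hdh : ∀ y ∈ U, DifferentiableAt ℝ (fun z => ψ z - polyPot d p K b c z) y :=
      fun y hy => (hψdiff y hy).sub (hPd y)
    have hcst := constOn_of_fderiv_zero hUopen hUconn.isPreconnected hdh hh0 hx hx₀U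
    have hPc : polyPot d p K b c x₀ = polyPot d p K b 0 x₀ + c := by
      simp [polyPot]
    have h0 : ψ x₀ - polyPot d p K b c x₀ = 0 := by
      rw [hPc, hcdef]; ring
    rw [h0] at hcst
    linarith [hcst]
  · -- converse direction
    intro K b c
    constructor
    · intro x hx i j hij
      rw [sder_polyPot]
      simp [hij]
    · intro x hx i j
      rw [sder_polyPot, sder_polyPot]
      simp only [if_pos rfl, if_true]
      rw [heKK, heKK]
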